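/- Let n ≥ 2, m ≥ 1 and 0 ≤ r ≤ m. For any permutations σ_0,…,σ_{m−1} of {0,…,n−1} and any permutation γ of {0,…,m−1}, both of the following permutations of {0,…,n−1}^m are automorphisms of D_n(r,m) and of C_n(r,m): (i_0,…,i_{m−1}) ↦ (σ_0(i_0),…,σ_{m−1}(i_{m−1})), and (i_0,…,i_{m−1}) ↦ (i_{γ(0)},…,i_{γ(m−1)}). -/

import Mathlib

open Finset

/-- The `l`-th subvector in the concatenation decomposition:
`(subvec v l) i' = v (i'|l)`. -/
def subvec {n m : ℕ} (v : (Fin (m + 1) → Fin n) → ZMod 2) (l : Fin n) :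
    (Fin m → Fin n) → ZMod 2 :=
  fun i' => v (Fin.snoc i' l)

/-- The Berman code `D_n(r,m)`, defined recursively. -/
def BermanD (n : ℕ) : (m : ℕ) → ℕ → Set ((Fin m → Fin n) → ZMod 2)
  | 0, _ => {0}
  | m + 1, r =>
    if r = 0 then {v | ∑ i, v i = 0}
    else if m + 1 ≤ r then {0}
    else {v | (∀ l : Fin n, subvec v l ∈ BermanD n m (r - 1)) ∧
              (fun i' => ∑ l : Fin n, subvec v l i') ∈ BermanD n m r}

/-- The dual Berman code `C_n(r,m)`, defined recursively. -/
def BermanC (n : ℕ) : (m : ℕ) → ℕ → Set ((Fin m → Fin n) → ZMod 2)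
  | 0, _ => Set.univ
  | m + 1, r =>
    if r = 0 then {v | ∃ c : ZMod 2, ∀ i, v i = c}
    else if m + 1 ≤ r then Set.univ
    else {v | ∃ (u : (Fin m → Fin n) → ZMod 2) (w : Fin n → (Fin m → Fin n) → ZMod 2),
            u ∈ BermanC n m r ∧
            (∀ l : Fin n, (l : ℕ) < n - 1 → w l ∈ BermanC n m (r - 1)) ∧
            (∀ l : Fin n, (l : ℕ) = n - 1 → w l = 0) ∧
            (∀ l : Fin n, subvec v l = u + w l)}

/-- Hamming weight of a binary vector. -/
def hwt {n m : ℕ} (v : (Fin m → Fin n) → ZMod 2) : ℕ :=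
  (Finset.univ.filter fun i => v i ≠ 0).card

/-- `preceq j i` means `j ⪯ i`: for every position `k`, either `j k = 0` or `j k = i k`. -/
def preceq {n m : ℕ} (j i : Fin m → Fin n) : Prop :=
  ∀ k, (j k : ℕ) = 0 ∨ j k = i k

instance {n m : ℕ} (j i : Fin m → Fin n) : Decidable (preceq j i) :=
  inferInstanceAs (Decidable (∀ k, (j k : ℕ) = 0 ∨ j k = i k))

/-- Hamming weight of an index tuple. -/
def wtTuple {n m : ℕ} (i : Fin m → Fin n) : ℕ :=
  (Finset.univ.filter fun k => (i k : ℕ) ≠ 0).card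

/-- The vector `c_m(i')`: the indicator of `{i : i ⪯ i'}`. -/
def cVec {n : ℕ} (m : ℕ) (i' : Fin m → Fin n) : (Fin m → Fin n) → ZMod 2 :=
  fun i => if preceq i i' then 1 else 0

/-- The vector `d_m(i')`: the indicator of `{i : i' ⪯ i}`. -/
def dVec {n : ℕ} (m : ℕ) (i' : Fin m → Fin n) : (Fin m → Fin n) → ZMod 2 :=
  fun i => if preceq i' i then 1 else 0

/-- The matrix `A_m = A_1^{⊗m}`: its entry in row `i` and column `j` is `1` iff `j ⪯ i`. -/
def Amat (n m : ℕ) : Matrix (Fin m → Fin n) (Fin m → Fin n) (ZMod 2) :=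
  fun i j => if preceq j i then 1 else 0

namespace BermanAux
def ok {n m : ℕ} (c : Fin m → Option (Fin n)) (j : Fin m → Fin n) : Prop :=
  ∀ k, ∀ a, c k = some a → j k = a

instance {n m : ℕ} (c : Fin m → Option (Fin n)) (j : Fin m → Fin n) : Decidable (ok c j) :=
  inferInstanceAs (Decidable (∀ k, ∀ a, c k = some a → j k = a))

def ind {n m : ℕ} (c : Fin m → Option (Fin n)) : (Fin m → Fin n) → ZMod 2 :=
  fun j => if ok c j then 1 else 0

def owt {n m : ℕ} (c : Fin m → Option (Fin n)) : ℕ :=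
  (Finset.univ.filter fun k => (c k).isSome).card

def snocEquiv (n m : ℕ) : ((Fin m → Fin n) × Fin n) ≃ (Fin (m+1) → Fin n) where
  toFun p := Fin.snoc p.1 p.2
  invFun j := (Fin.init j, j (Fin.last m))
  left_inv p := by simp [Fin.init_snoc, Fin.snoc_last]
  right_inv j := by simp [Fin.snoc_init_self]

lemma sum_snoc {n m : ℕ} (F : (Fin (m+1) → Fin n) → ZMod 2) :
    ∑ j, F j = ∑ j' : Fin m → Fin n, ∑ l : Fin n, F (Fin.snoc j' l) := by
  rw [← (snocEquiv n m).sum_comp F, Fintype.sum_prod_type]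
  rfl

lemma ok_snoc {n m : ℕ} (c : Fin m → Option (Fin n)) (t : Option (Fin n))
    (j' : Fin m → Fin n) (l : Fin n) :
    ok (Fin.snoc c t) (Fin.snoc j' l) ↔ ok c j' ∧ ∀ a, t = some a → l = a := by
  constructor
  · intro h
    refine ⟨fun k a hk => ?_, fun a ht => ?_⟩
    · have := h (Fin.castSucc k) a (by simpa using hk)
      simpa using this
    · have := h (Fin.last m) a (by simpa using ht)
      simpa using this
  · rintro ⟨h1, h2⟩ k a hk
    induction k using Fin.lastCases with
    | last =>
      simp only [Fin.snoc_last] at hk ⊢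
      exact h2 a hk
    | cast k =>
      simp only [Fin.snoc_castSucc] at hk ⊢
      exact h1 k a hk

lemma ind_snoc {n m : ℕ} (c : Fin m → Option (Fin n)) (t : Option (Fin n))
    (j' : Fin m → Fin n) (l : Fin n) :
    ind (Fin.snoc c t) (Fin.snoc j' l)
      = ind c j' * if ∀ a, t = some a → l = a then 1 else 0 := by
  simp only [ind]
  by_cases h1 : ok c j' <;> by_cases h2 : (∀ a, t = some a → l = a) <;>
    simp [ok_snoc, h1, h2]

lemma owt_snoc {n m : ℕ} (c : Fin m → Option (Fin n)) (t : Option (Fin n)) :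
    owt (Fin.snoc c t) = owt c + if t.isSome then 1 else 0 := by
  simp only [owt, Finset.card_filter]
  rw [Fin.sum_univ_castSucc]
  simp

lemma sum_ind_snoc_none {n m : ℕ} (c : Fin m → Option (Fin n))
    (v : (Fin (m+1) → Fin n) → ZMod 2) :
    ∑ j, ind (Fin.snoc c none) j * v j
      = ∑ j' : Fin m → Fin n, ind c j' * ∑ l : Fin n, v (Fin.snoc j' l) := by
  rw [sum_snoc (fun j => ind (Fin.snoc c none) j * v j)]
  refine Finset.sum_congr rfl fun j' _ => ?_
  rw [Finset.mul_sum]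
  refine Finset.sum_congr rfl fun l _ => ?_
  rw [ind_snoc]
  simp

lemma sum_ind_snoc_some {n m : ℕ} (c : Fin m → Option (Fin n)) (a : Fin n)
    (v : (Fin (m+1) → Fin n) → ZMod 2) :
    ∑ j, ind (Fin.snoc c (some a)) j * v j
      = ∑ j' : Fin m → Fin n, ind c j' * v (Fin.snoc j' a) := by
  rw [sum_snoc (fun j => ind (Fin.snoc c (some a)) j * v j)]
  refine Finset.sum_congr rfl fun j' _ => ?_
  have : ∀ l : Fin n, ind (Fin.snoc c (some a)) (Fin.snoc j' l) * v (Fin.snoc j' l)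
      = if l = a then ind c j' * v (Fin.snoc j' l) else 0 := by
    intro l
    rw [ind_snoc]
    by_cases h : l = a <;> simp [h]
  simp only [this]
  rw [Finset.sum_ite_eq' Finset.univ a (fun l => ind c j' * v (Fin.snoc j' l))]
  simp

lemma ind_diag {n m : ℕ} (i j : Fin m → Fin n) :
    ind (fun k => some (i k)) j = if j = i then 1 else 0 := by
  simp only [ind]
  have : ok (fun k => some (i k)) j ↔ j = i := by
    simp only [ok, Option.some.injEq, funext_iff]
    constructor
    · intro h k; exact h k (i k) rfl
    · rintro h k a rfl; exact h k
  simp [this]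

lemma sum_ind_diag {n m : ℕ} (i : Fin m → Fin n) (v : (Fin m → Fin n) → ZMod 2) :
    ∑ j, ind (fun k => some (i k)) j * v j = v i := by
  simp only [ind_diag, ite_mul, one_mul, zero_mul]
  rw [Finset.sum_ite_eq' Finset.univ i v]
  simp

lemma owt_allsome {n m : ℕ} (i : Fin m → Fin n) :
    owt (fun k => some (i k)) = m := by
  simp [owt]

lemma owt_none {n m : ℕ} : owt (fun _ : Fin m => (none : Option (Fin n))) = 0 := by
  simp [owt]

lemma ind_allnone {n m : ℕ} (c : Fin m → Option (Fin n)) (hc : ∀ k, c k = none)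
    (j : Fin m → Fin n) : ind c j = 1 := by
  simp [ind, ok, hc]

lemma owt_eq_zero {n m : ℕ} {c : Fin m → Option (Fin n)} (h : owt c = 0) :
    ∀ k, c k = none := by
  intro k
  simp only [owt, Finset.card_eq_zero, Finset.filter_eq_empty_iff] at h
  have := h (Finset.mem_univ k)
  simpa [Option.not_isSome_iff_eq_none] using this


lemma zmod2_cases : ∀ c : ZMod 2, c = 0 ∨ c = 1 := by decide

lemma zero_mem_C (n : ℕ) : ∀ m r, (0 : (Fin m → Fin n) → ZMod 2) ∈ BermanC n m r := by
  intro m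
  induction m with
  | zero => intro r; simp [BermanC]
  | succ m ih =>
    intro r
    by_cases h0 : r = 0
    · subst h0
      simp only [BermanC, if_pos rfl, Set.mem_setOf_eq]
      exact ⟨0, fun i => rfl⟩
    · by_cases h1 : m + 1 ≤ r
      · simp [BermanC, h0, h1]
      · simp only [BermanC, if_neg h0, if_neg h1, Set.mem_setOf_eq]
        refine ⟨0, 0, ih r, fun l _ => ih (r-1), fun l _ => rfl, fun l => ?_⟩
        funext j
        simp [subvec]

lemma add_mem_C (n : ℕ) : ∀ m r (v w : (Fin m → Fin n) → ZMod 2),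
    v ∈ BermanC n m r → w ∈ BermanC n m r → v + w ∈ BermanC n m r := by
  intro m
  induction m with
  | zero => intro r v w _ _; simp [BermanC]
  | succ m ih =>
    intro r v w hv hw
    by_cases h0 : r = 0
    · subst h0
      simp only [BermanC, if_pos rfl, Set.mem_setOf_eq] at hv hw ⊢
      obtain ⟨cv, hcv⟩ := hv
      obtain ⟨cw, hcw⟩ := hw
      exact ⟨cv + cw, fun i => by simp [hcv i, hcw i]⟩
    · by_cases h1 : m + 1 ≤ r
      · simp [BermanC, h0, h1]
      · simp only [BermanC, if_neg h0, if_neg h1, Set.mem_setOf_eq] at hv hw ⊢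
        obtain ⟨u, wv, hu, hw1, hw2, hs⟩ := hv
        obtain ⟨u', wv', hu', hw1', hw2', hs'⟩ := hw
        refine ⟨u + u', wv + wv', ih r u u' hu hu',
          fun l hl => ih (r-1) (wv l) (wv' l) (hw1 l hl) (hw1' l hl),
          fun l hl => by simp [Pi.add_apply, hw2 l hl, hw2' l hl], fun l => ?_⟩
        funext j
        have e1 := congrFun (hs l) j
        have e2 := congrFun (hs' l) j
        simp only [subvec, Pi.add_apply] at e1 e2 ⊢
        rw [e1, e2]
        ring

lemma const_mem_C0 (n : ℕ) (m : ℕ) (cst : ZMod 2) :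
    (fun _ => cst : (Fin m → Fin n) → ZMod 2) ∈ BermanC n m 0 := by
  cases m with
  | zero => simp [BermanC]
  | succ m => exact ⟨cst, fun i => rfl⟩

lemma mono_C (n : ℕ) : ∀ m r r', r ≤ r' → BermanC n m r ⊆ BermanC n m r' := by
  intro m
  induction m with
  | zero => intro r r' _; simp [BermanC]
  | succ m ih =>
    intro r r' hrr v hv
    by_cases h0' : r' = 0
    · have : r = 0 := by omega
      subst this; subst h0'
      exact hv
    · by_cases h1' : m + 1 ≤ r'
      · simp [BermanC, h0', h1']
      · simp only [BermanC, if_neg h0', if_neg h1', Set.mem_setOf_eq]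
        by_cases h0 : r = 0
        · subst h0
          simp only [BermanC, if_pos rfl, Set.mem_setOf_eq] at hv
          obtain ⟨cst, hcst⟩ := hv
          refine ⟨fun _ => cst, 0, ih 0 r' (Nat.zero_le _) (const_mem_C0 n m cst),
            fun l _ => zero_mem_C n m _, fun l _ => rfl, fun l => ?_⟩
          funext j
          simp [subvec, hcst]
        · have h1 : ¬ m + 1 ≤ r := by omega
          simp only [BermanC, if_neg h0, if_neg h1, Set.mem_setOf_eq] at hv
          obtain ⟨u, w, hu, hw1, hw2, hs⟩ := hv
          exact ⟨u, w, ih r r' hrr hu,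
            fun l hl => ih (r-1) (r'-1) (by omega) (hw1 l hl), hw2, hs⟩

lemma ind_mem_C (n : ℕ) : ∀ m r (c : Fin m → Option (Fin n)),
    owt c ≤ r → ind c ∈ BermanC n m r := by
  intro m
  induction m with
  | zero => intro r c _; simp [BermanC]
  | succ m ih =>
    intro r c hc
    by_cases h0 : r = 0
    · subst h0
      simp only [BermanC, if_pos rfl, Set.mem_setOf_eq]
      exact ⟨1, fun i => ind_allnone c (owt_eq_zero (Nat.le_zero.mp hc)) i⟩
    · by_cases h1 : m + 1 ≤ r
      · simp [BermanC, h0, h1]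
      · simp only [BermanC, if_neg h0, if_neg h1, Set.mem_setOf_eq]
        have hc' : c = Fin.snoc (Fin.init c) (c (Fin.last m)) :=
          (Fin.snoc_init_self c).symm
        have howt : owt c = owt (Fin.init c) + if (c (Fin.last m)).isSome then 1 else 0 := by
          conv_lhs => rw [hc']
          rw [owt_snoc]
        have hsub : ∀ (j' : Fin m → Fin n) (l : Fin n),
            subvec (ind c) l j' = ind (Fin.init c) j' *
              if (∀ a, c (Fin.last m) = some a → l = a) then 1 else 0 := by
          intro j' l
          show ind c (Fin.snoc j' l) = _
          conv_lhs => rw [hc']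
          rw [ind_snoc]
        rcases ht : c (Fin.last m) with _ | a
        · -- t = none : generator lifted along last coordinate
          rw [ht] at howt
          simp only [Option.isSome_none, Bool.false_eq_true, if_false, add_zero] at howt
          refine ⟨ind (Fin.init c), 0, ih r (Fin.init c) (by omega),
            fun l _ => zero_mem_C n m _, fun l _ => rfl, fun l => ?_⟩
          funext j'
          rw [Pi.add_apply, hsub j' l, ht]
          simp
        · rw [ht] at howt
          simp only [Option.isSome_some, if_true] at howt
          have hc0 : owt (Fin.init c) ≤ r - 1 := by omega
          by_cases ha : (a : ℕ) = n - 1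
          · refine ⟨ind (Fin.init c),
              fun l => if (l : ℕ) = n - 1 then 0 else ind (Fin.init c),
              mono_C n m (r-1) r (by omega) (ih (r-1) (Fin.init c) hc0),
              fun l hl => ?_, fun l hl => by simp [hl], fun l => ?_⟩
            · beta_reduce
              rw [if_neg (by omega)]
              exact ih (r-1) (Fin.init c) hc0
            · funext j'
              beta_reduce
              rw [Pi.add_apply, hsub j' l, ht]
              beta_reduce
              by_cases hla : l = a
              · subst hla
                have hif : (if (l : ℕ) = n - 1 then (0 : (Fin m → Fin n) → ZMod 2)
                    else ind (Fin.init c)) = 0 := if_pos ha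
                rw [hif, Pi.zero_apply, add_zero,
                  if_pos (fun b hb => by injection hb), mul_one]
              · have hlv : (l : ℕ) ≠ n - 1 := by
                  intro h
                  exact hla (Fin.ext (h.trans ha.symm))
                have hif : (if (l : ℕ) = n - 1 then (0 : (Fin m → Fin n) → ZMod 2)
                    else ind (Fin.init c)) = ind (Fin.init c) := if_neg hlv
                rw [hif,
                  if_neg (fun h => hla (h a rfl)), mul_zero, CharTwo.add_self_eq_zero]
          · refine ⟨0, fun l => if l = a then ind (Fin.init c) else 0,
              zero_mem_C n m r, fun l hl => ?_, fun l hl => ?_, fun l => ?_⟩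
            · beta_reduce
              by_cases hla : l = a
              · rw [if_pos hla]
                exact ih (r-1) (Fin.init c) hc0
              · rw [if_neg hla]
                exact zero_mem_C n m (r-1)
            · beta_reduce
              rw [if_neg (fun h : l = a => ha (h ▸ hl))]
            · funext j'
              beta_reduce
              rw [Pi.add_apply, hsub j' l, ht, Pi.zero_apply, zero_add]
              beta_reduce
              by_cases hla : l = a
              · subst hla
                rw [if_pos rfl,
                  if_pos (fun b hb => by injection hb), mul_one]
              · rw [if_neg hla, if_neg (fun h => hla (h a rfl)), mul_zero, Pi.zero_apply]

def GsetP (n m r : ℕ) : Set ((Fin m → Fin n) → ZMod 2) :=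
  {g | ∃ c : Fin m → Option (Fin n), owt c ≤ r ∧ g = ind c}

lemma span_le_C (n m r : ℕ) :
    ∀ v ∈ Submodule.span (ZMod 2) (GsetP n m r), v ∈ BermanC n m r := by
  intro v hv
  induction hv using Submodule.span_induction with
  | mem x hx => obtain ⟨c, hc, rfl⟩ := hx; exact ind_mem_C n m r c hc
  | zero => exact zero_mem_C n m r
  | add x y _ _ hx hy => exact add_mem_C n m r x y hx hy
  | smul a x _ hx =>
    rcases zmod2_cases a with h | h <;> subst h
    · simpa using zero_mem_C n m r
    · simpa using hx

lemma lift_mem_span (n m r : ℕ) (u : (Fin m → Fin n) → ZMod 2)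
    (hu : u ∈ Submodule.span (ZMod 2) (GsetP n m r)) :
    (fun j => u (Fin.init j)) ∈ Submodule.span (ZMod 2) (GsetP n (m+1) r) := by
  induction hu using Submodule.span_induction with
  | mem x hx =>
    obtain ⟨c, hc, rfl⟩ := hx
    refine Submodule.subset_span ⟨Fin.snoc c none, ?_, ?_⟩
    · rw [owt_snoc]; simpa using hc
    · funext j
      conv_rhs => rw [show j = Fin.snoc (Fin.init j) (j (Fin.last m)) from
        (Fin.snoc_init_self j).symm, ind_snoc]
      simp
  | zero =>
    convert Submodule.zero_mem (Submodule.span (ZMod 2) (GsetP n (m+1) r)) using 2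
    rfl
  | add x y _ _ hx hy =>
    have : (fun j : Fin (m+1) → Fin n => (x + y) (Fin.init j))
        = (fun j : Fin (m+1) → Fin n => x (Fin.init j))
          + fun j : Fin (m+1) → Fin n => y (Fin.init j) := by
      funext j; simp
    rw [this]; exact Submodule.add_mem _ hx hy
  | smul a x _ hx =>
    have : (fun j : Fin (m+1) → Fin n => (a • x) (Fin.init j))
        = a • fun j : Fin (m+1) → Fin n => x (Fin.init j) := by
      funext j; simp
    rw [this]; exact Submodule.smul_mem _ a hx

lemma embed_mem_span (n m r : ℕ) (hr : 1 ≤ r) (l : Fin n)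
    (x : (Fin m → Fin n) → ZMod 2)
    (hx : x ∈ Submodule.span (ZMod 2) (GsetP n m (r-1))) :
    (fun j => if j (Fin.last m) = l then x (Fin.init j) else 0)
      ∈ Submodule.span (ZMod 2) (GsetP n (m+1) r) := by
  induction hx using Submodule.span_induction with
  | mem g hg =>
    obtain ⟨c, hc, rfl⟩ := hg
    refine Submodule.subset_span ⟨Fin.snoc c (some l), ?_, ?_⟩
    · rw [owt_snoc]; simp only [Option.isSome_some, if_true]; omega
    · funext j
      conv_rhs => rw [show j = Fin.snoc (Fin.init j) (j (Fin.last m)) from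
        (Fin.snoc_init_self j).symm, ind_snoc]
      by_cases h : j (Fin.last m) = l
      · rw [if_pos h, if_pos (fun b hb => by injection hb with hb'; rw [h, ← hb']), mul_one]
      · rw [if_neg h, if_neg (fun hh => h (hh l rfl)), mul_zero]
  | zero =>
    have hz : (fun j : Fin (m+1) → Fin n =>
        if j (Fin.last m) = l then (0 : (Fin m → Fin n) → ZMod 2) (Fin.init j) else 0)
        = (0 : (Fin (m+1) → Fin n) → ZMod 2) := by
      funext j; simp
    rw [hz]
    exact Submodule.zero_mem _
  | add x y _ _ hx hy =>
    have : (fun j : Fin (m+1) → Fin n => if j (Fin.last m) = l then (x + y) (Fin.init j) else 0)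
        = (fun j : Fin (m+1) → Fin n => if j (Fin.last m) = l then x (Fin.init j) else 0)
          + fun j : Fin (m+1) → Fin n => if j (Fin.last m) = l then y (Fin.init j) else 0 := by
      funext j
      by_cases h : j (Fin.last m) = l <;> simp [h]
    rw [this]; exact Submodule.add_mem _ hx hy
  | smul a x _ hx =>
    have : (fun j : Fin (m+1) → Fin n => if j (Fin.last m) = l then (a • x) (Fin.init j) else 0)
        = a • fun j : Fin (m+1) → Fin n => if j (Fin.last m) = l then x (Fin.init j) else 0 := by
      funext j
      by_cases h : j (Fin.last m) = l <;> simp [h]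
    rw [this]; exact Submodule.smul_mem _ a hx

lemma C_le_span (n : ℕ) : ∀ m r, ∀ v ∈ BermanC n m r,
    v ∈ Submodule.span (ZMod 2) (GsetP n m r) := by
  intro m
  induction m with
  | zero =>
    intro r v _
    have hv : v = v (fun k => k.elim0)
        • ind (fun _ : Fin 0 => (none : Option (Fin n))) := by
      funext j
      have hj : j = fun k => k.elim0 := Subsingleton.elim _ _
      rw [hj]
      simp [ind_allnone (fun _ : Fin 0 => (none : Option (Fin n))) (fun _ => rfl)]
    rw [hv]
    exact Submodule.smul_mem _ _
      (Submodule.subset_span ⟨fun _ => none, by simp [owt_none], rfl⟩)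
  | succ m ih =>
    intro r v hv
    by_cases h0 : r = 0
    · subst h0
      simp only [BermanC, if_pos rfl, Set.mem_setOf_eq] at hv
      obtain ⟨cst, hcst⟩ := hv
      have hv' : v = cst • ind (fun _ => (none : Option (Fin n))) := by
        funext i
        simp [hcst i, ind_allnone (fun _ => (none : Option (Fin n))) (fun _ => rfl)]
      rw [hv']
      exact Submodule.smul_mem _ _
        (Submodule.subset_span ⟨fun _ => none, by simp [owt_none], rfl⟩)
    · by_cases h1 : m + 1 ≤ r
      · have hv' : v = ∑ i : Fin (m+1) → Fin n, v i • ind (fun k => some (i k)) := by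
          funext j
          rw [Finset.sum_apply]
          simp only [Pi.smul_apply, smul_eq_mul, ind_diag]
          rw [Finset.sum_congr rfl (fun i _ => by
            rw [show v i * (if j = i then 1 else 0) = if j = i then v i else 0 by
              by_cases h : j = i <;> simp [h]])]
          rw [Finset.sum_ite_eq Finset.univ j v]
          simp
        rw [hv']
        exact Submodule.sum_mem _ fun i _ => Submodule.smul_mem _ _
          (Submodule.subset_span ⟨fun k => some (i k), by rw [owt_allsome]; omega, rfl⟩)
      · simp only [BermanC, if_neg h0, if_neg h1, Set.mem_setOf_eq] at hv
        obtain ⟨u, w, hu, hw1, hw2, hs⟩ := hv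
        have hv' : v = (fun j => u (Fin.init j))
            + ∑ l : Fin n, (fun j => if j (Fin.last m) = l then w l (Fin.init j) else 0) := by
          funext j
          have e1 := congrFun (hs (j (Fin.last m))) (Fin.init j)
          simp only [subvec, Pi.add_apply, Fin.snoc_init_self] at e1
          rw [Pi.add_apply, Finset.sum_apply]
          beta_reduce
          rw [Finset.sum_ite_eq Finset.univ (j (Fin.last m)) (fun l => w l (Fin.init j))]
          rw [if_pos (Finset.mem_univ _)]
          exact e1
        rw [hv']
        refine Submodule.add_mem _ (lift_mem_span n m r u (ih r u hu)) ?_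
        refine Submodule.sum_mem _ fun l _ => ?_
        rcases Nat.lt_or_ge (l : ℕ) (n - 1) with hl | hl
        · exact embed_mem_span n m r (by omega) l (w l) (ih (r-1) (w l) (hw1 l hl))
        · have hln : (l : ℕ) = n - 1 := by have := l.isLt; omega
          have : (fun j => if j (Fin.last m) = l then w l (Fin.init j) else 0)
              = (0 : (Fin (m+1) → Fin n) → ZMod 2) := by
            funext j
            rw [hw2 l hln]
            by_cases h : j (Fin.last m) = l <;> simp [h]
          rw [this]
          exact Submodule.zero_mem _

lemma Cchar (n m r : ℕ) :
    BermanC n m r = ↑(Submodule.span (ZMod 2) (GsetP n m r)) :=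
  Set.Subset.antisymm (fun v hv => C_le_span n m r v hv)
    (fun v hv => span_le_C n m r v hv)


def DsetP (n m r : ℕ) : Set ((Fin m → Fin n) → ZMod 2) :=
  {v | ∀ c : Fin m → Option (Fin n), owt c ≤ r → ∑ j, ind c j * v j = 0}

lemma Dchar (n : ℕ) : ∀ m r, BermanD n m r = DsetP n m r := by
  intro m
  induction m with
  | zero =>
    intro r
    ext v
    simp only [BermanD, DsetP, Set.mem_setOf_eq, Set.mem_singleton_iff]
    constructor
    · rintro rfl c _; simp
    · intro h
      funext j
      have h0 : owt (fun k => some (j k)) ≤ r := by rw [owt_allsome]; exact Nat.zero_le r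
      have := h (fun k => some (j k)) h0
      rwa [sum_ind_diag] at this
  | succ m ih =>
    intro r
    by_cases hr0 : r = 0
    · subst hr0
      ext v
      simp only [BermanD, if_pos rfl, DsetP, Set.mem_setOf_eq]
      constructor
      · intro h c hc
        have hnone := owt_eq_zero (Nat.le_zero.mp hc)
        simp only [ind_allnone c hnone, one_mul]
        exact h
      · intro h
        have := h (fun _ => none) (by rw [owt_none])
        simpa [ind_allnone (fun _ => none) (fun _ => rfl)] using this
    · by_cases hrm : m + 1 ≤ r
      · ext v
        simp only [BermanD, if_neg hr0, if_pos hrm, DsetP, Set.mem_setOf_eq,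
          Set.mem_singleton_iff]
        constructor
        · rintro rfl c _; simp
        · intro h
          funext i
          have := h (fun k => some (i k)) (by rw [owt_allsome]; exact hrm)
          rwa [sum_ind_diag] at this
      · ext v
        simp only [BermanD, if_neg hr0, if_neg hrm, Set.mem_setOf_eq, ih,
          DsetP, subvec]
        constructor
        · rintro ⟨h1, h2⟩ c hc
          have hc' : c = Fin.snoc (Fin.init c) (c (Fin.last m)) :=
            (Fin.snoc_init_self c).symm
          rw [hc'] at hc ⊢
          rcases ht : c (Fin.last m) with _ | a
          · rw [sum_ind_snoc_none]
            rw [owt_snoc] at hc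
            refine h2 (Fin.init c) ?_
            rw [ht] at hc
            simp only [Option.isSome_none] at hc
            omega
          · rw [sum_ind_snoc_some]
            rw [owt_snoc] at hc
            refine h1 a (Fin.init c) ?_
            rw [ht] at hc
            simp only [Option.isSome_some, if_true] at hc
            omega
        · intro h
          refine ⟨fun l c hc => ?_, fun c hc => ?_⟩
          · have := h (Fin.snoc c (some l)) (by rw [owt_snoc]; simp; omega)
            rwa [sum_ind_snoc_some] at this
          · have := h (Fin.snoc c none) (by rw [owt_snoc]; simpa)
            rwa [sum_ind_snoc_none] at this



def permE {n m : ℕ} (σ : Fin m → Equiv.Perm (Fin n)) (γ : Equiv.Perm (Fin m)) :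
    (Fin m → Fin n) ≃ (Fin m → Fin n) where
  toFun i := fun k => σ k (i (γ k))
  invFun j := fun k => (σ (γ.symm k)).symm (j (γ.symm k))
  left_inv i := by funext k; simp
  right_inv j := by funext k; simp

def ctrans {n m : ℕ} (σ : Fin m → Equiv.Perm (Fin n)) (γ : Equiv.Perm (Fin m))
    (c : Fin m → Option (Fin n)) : Fin m → Option (Fin n) :=
  fun k' => (c (γ k')).map (σ k')

lemma owt_ctrans {n m : ℕ} (σ : Fin m → Equiv.Perm (Fin n)) (γ : Equiv.Perm (Fin m))
    (c : Fin m → Option (Fin n)) : owt (ctrans σ γ c) = owt c := by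
  simp only [owt, Finset.card_filter]
  simp only [ctrans]
  rw [← Equiv.sum_comp γ (fun k => if (c k).isSome then (1:ℕ) else 0)]
  refine Finset.sum_congr rfl fun k _ => ?_
  simp only [Option.isSome_map]

lemma ind_ctrans {n m : ℕ} (σ : Fin m → Equiv.Perm (Fin n)) (γ : Equiv.Perm (Fin m))
    (c : Fin m → Option (Fin n)) (i : Fin m → Fin n) :
    ind (ctrans σ γ c) (permE σ γ i) = ind c i := by
  have hiff : ok (ctrans σ γ c) (permE σ γ i) ↔ ok c i := by
    constructor
    · intro h k a hk
      have := h (γ.symm k) ((σ (γ.symm k)) a)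
        (by simp [ctrans, Equiv.apply_symm_apply, hk])
      simpa [permE, Equiv.apply_symm_apply] using this
    · intro h k' a' hk'
      simp only [ctrans] at hk'
      rcases hmap : c (γ k') with _ | b
      · rw [hmap] at hk'; simp at hk'
      · have hb := h (γ k') b hmap
        rw [hmap] at hk'
        simp only [Option.map_some] at hk'
        injection hk' with hk''
        simp only [permE, Equiv.coe_fn_mk]
        rw [hb, hk'']
  simp only [ind, hiff]

lemma permD (n m r : ℕ) (σ : Fin m → Equiv.Perm (Fin n)) (γ : Equiv.Perm (Fin m))
    (v : (Fin m → Fin n) → ZMod 2) (hv : v ∈ DsetP n m r) :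
    (fun i => v (permE σ γ i)) ∈ DsetP n m r := by
  intro c hc
  have h0 := hv (ctrans σ γ c) (by rw [owt_ctrans]; exact hc)
  rw [← Equiv.sum_comp (permE σ γ) (fun j => ind (ctrans σ γ c) j * v j)] at h0
  simpa only [ind_ctrans] using h0

lemma permC (n m r : ℕ) (σ : Fin m → Equiv.Perm (Fin n)) (γ : Equiv.Perm (Fin m))
    (v : (Fin m → Fin n) → ZMod 2)
    (hv : v ∈ Submodule.span (ZMod 2) (GsetP n m r)) :
    (fun i => v (permE σ γ i)) ∈ Submodule.span (ZMod 2) (GsetP n m r) := by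
  induction hv using Submodule.span_induction with
  | mem x hx =>
    obtain ⟨c, hc, rfl⟩ := hx
    set c₀ : Fin m → Option (Fin n) :=
      fun k => (c (γ.symm k)).map ((σ (γ.symm k)).symm) with hc₀
    have hTc : ctrans σ γ c₀ = c := by
      funext k'
      simp only [ctrans, hc₀, Equiv.symm_apply_apply]
      rcases c k' with _ | b <;> simp
    have howt : owt c₀ = owt c := by
      conv_rhs => rw [← hTc]
      rw [owt_ctrans]
    refine Submodule.subset_span ⟨c₀, by omega, ?_⟩
    funext i
    conv_lhs => rw [← hTc]
    rw [ind_ctrans]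
  | zero => convert Submodule.zero_mem (Submodule.span (ZMod 2) (GsetP n m r)) using 2; rfl
  | add x y _ _ hx hy =>
    have : (fun i => (x + y) (permE σ γ i))
        = (fun i => x (permE σ γ i)) + fun i => y (permE σ γ i) := by
      funext i; simp
    rw [this]; exact Submodule.add_mem _ hx hy
  | smul a x _ hx =>
    have : (fun i => (a • x) (permE σ γ i)) = a • fun i => x (permE σ γ i) := by
      funext i; simp
    rw [this]; exact Submodule.smul_mem _ a hx

end BermanAux


/-- componentwise permutations of `{0,…,n−1}` and permutations of the `m`
positions are automorphisms of both `D_n(r,m)` and `C_n(r,m)`. -/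
theorem berman_autos (n m r : ℕ) (hn : 2 ≤ n) (hm : 1 ≤ m) (hr : r ≤ m)
    (σ : Fin m → Equiv.Perm (Fin n)) (γ : Equiv.Perm (Fin m)) :
    (∀ v ∈ BermanD n m r,
      (fun i : Fin m → Fin n => v fun k => σ k (i k)) ∈ BermanD n m r) ∧
    (∀ v ∈ BermanC n m r,
      (fun i : Fin m → Fin n => v fun k => σ k (i k)) ∈ BermanC n m r) ∧
    (∀ v ∈ BermanD n m r,
      (fun i : Fin m → Fin n => v fun k => i (γ k)) ∈ BermanD n m r) ∧
    (∀ v ∈ BermanC n m r,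
      (fun i : Fin m → Fin n => v fun k => i (γ k)) ∈ BermanC n m r) := by
  refine ⟨fun v hv => ?_, fun v hv => ?_, fun v hv => ?_, fun v hv => ?_⟩
  · rw [BermanAux.Dchar] at hv ⊢
    have := BermanAux.permD n m r σ 1 v hv
    simpa [BermanAux.permE] using this
  · rw [BermanAux.Cchar] at hv ⊢
    rw [SetLike.mem_coe] at hv ⊢
    have := BermanAux.permC n m r σ 1 v hv
    simpa [BermanAux.permE] using this
  · rw [BermanAux.Dchar] at hv ⊢
    have := BermanAux.permD n m r (fun _ => 1) γ v hv
    simpa [BermanAux.permE] using this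
  · rw [BermanAux.Cchar] at hv ⊢
    rw [SetLike.mem_coe] at hv ⊢
    have := BermanAux.permC n m r (fun _ => 1) γ v hv
    simpa [BermanAux.permE] using this
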